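/- arXiv:1601.06632 — 2 statements merged into one kernel-verified Lean document; each statement's English description precedes it below -/
import Mathlib

section
/- Let N ≥ 1, let p ≥ 0 and λ > 0 be real numbers, and let f : ℝ^N → ℝ be a continuous, ℤ^N-periodic, everywhere strictly positive function. If u₁ and u₂ are two C², ℤ^N-periodic admissible functions both satisfying det A[u](x) = e^{−λu(x)} · f(x) · (1 + ‖∇u(x)‖²)^p for all x, then u₁ = u₂. -/
open Matrix Real

/-- The `i`-th partial derivative (gradient component) of `u` at `x`. -/
noncomputable def grad {N : ℕ} (u : (Fin N → ℝ) → ℝ) (x : Fin N → ℝ) (i : Fin N) : ℝ :=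
  fderiv ℝ u x (Pi.single i 1)

/-- The `(i,j)` entry of the Hessian matrix of `u` at `x`. -/
noncomputable def hess {N : ℕ} (u : (Fin N → ℝ) → ℝ) (x : Fin N → ℝ) (i j : Fin N) : ℝ :=
  fderiv ℝ (fun y => fderiv ℝ u y (Pi.single j 1)) x (Pi.single i 1)

/-- The squared norm of the gradient of `u` at `x`. -/
noncomputable def gradSq {N : ℕ} (u : (Fin N → ℝ) → ℝ) (x : Fin N → ℝ) : ℝ :=
  ∑ i, (grad u x i) ^ 2

/-- The Laplacian of `u` at `x` (trace of the Hessian). -/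
noncomputable def lap {N : ℕ} (u : (Fin N → ℝ) → ℝ) (x : Fin N → ℝ) : ℝ :=
  ∑ i, hess u x i i

/-- The matrix `A[u](x) = I + ∇u(x) (∇u(x))ᵀ − Hess u(x)`. -/
noncomputable def amat {N : ℕ} (u : (Fin N → ℝ) → ℝ) (x : Fin N → ℝ) :
    Matrix (Fin N) (Fin N) ℝ :=
  1 + Matrix.of (fun i j => grad u x i * grad u x j) - Matrix.of (fun i j => hess u x i j)

/-- `u` is `ℤ^N`-periodic. -/
def ZPeriodic {N : ℕ} (u : (Fin N → ℝ) → ℝ) : Prop :=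
  ∀ (x : Fin N → ℝ) (k : Fin N → ℤ), u (x + fun i => (k i : ℝ)) = u x

/-- `u` is admissible: `A[u](x)` is positive definite for every `x`. -/
def Admissible {N : ℕ} (u : (Fin N → ℝ) → ℝ) : Prop :=
  ∀ x, (amat u x).PosDef

section Aux

open scoped MatrixOrder

lemma det_one_add_psd {n : ℕ} {C : Matrix (Fin n) (Fin n) ℝ} (hC : C.PosSemidef) :
    1 ≤ (1 + C).det := by
  have hH := hC.1
  have hspec := hH.spectral_theorem
  set U : Matrix (Fin n) (Fin n) ℝ := (hH.eigenvectorUnitary : Matrix (Fin n) (Fin n) ℝ) with hU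
  set D : Matrix (Fin n) (Fin n) ℝ := diagonal (RCLike.ofReal ∘ hH.eigenvalues) with hD
  have hUU : U * star U = 1 := mem_unitaryGroup_iff.mp hH.eigenvectorUnitary.2
  have h1 : (1 + C) = U * (1 + D) * star U := by
    rw [Unitary.conjStarAlgAut_apply] at hspec
    rw [Matrix.mul_add, Matrix.add_mul, Matrix.mul_one, hUU, ← hspec]
  have h2 : U.det * (star U).det = 1 := by rw [← Matrix.det_mul, hUU, Matrix.det_one]
  have hdet : (1 + C).det = (1 + D).det := by
    rw [h1, Matrix.det_mul, Matrix.det_mul,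
      show U.det * (1 + D).det * (star U).det = (1 + D).det * (U.det * (star U).det) from by ring,
      h2, mul_one]
  rw [hdet, hD, ← Matrix.diagonal_one, Matrix.diagonal_add, Matrix.det_diagonal]
  calc (1:ℝ) = ∏ _i : Fin n, 1 := by simp
  _ ≤ _ := by
      apply Finset.prod_le_prod (fun i _ => zero_le_one)
      intro i _
      have := hC.eigenvalues_nonneg i
      simp only [Pi.add_apply, Function.comp, RCLike.ofReal_real_eq_id, id, Pi.one_apply]
      linarith

lemma det_le_det_add_psd {n : ℕ} {A B : Matrix (Fin n) (Fin n) ℝ}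
    (hA : A.PosDef) (hB : B.PosSemidef) : A.det ≤ (A + B).det := by
  set S := CFC.sqrt A with hS
  have hSS : S * S = A := CFC.sqrt_mul_sqrt_self A hA.posSemidef.nonneg
  have hdetA : 0 < A.det := hA.det_pos
  have hdetS : IsUnit S.det := by
    have h2 : S.det * S.det = A.det := by rw [← Matrix.det_mul, hSS]
    rcases eq_or_ne S.det 0 with h | h
    · rw [h, mul_zero] at h2; linarith
    · exact Ne.isUnit h
  have hSinv : S * S⁻¹ = 1 := Matrix.mul_nonsing_inv S hdetS
  have hSinv' : S⁻¹ * S = 1 := Matrix.nonsing_inv_mul S hdetS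
  have hSh : S⁻¹ᴴ = S⁻¹ := ((CFC.sqrt_nonneg A).posSemidef.1.inv).eq
  have hC : (S⁻¹ * B * S⁻¹).PosSemidef := by
    have := hB.conjTranspose_mul_mul_same S⁻¹
    rwa [hSh] at this
  have key : A + B = S * (1 + S⁻¹ * B * S⁻¹) * S := by
    rw [Matrix.mul_add, Matrix.add_mul, Matrix.mul_one, hSS]
    congr 1
    rw [show S * (S⁻¹ * B * S⁻¹) * S = (S * S⁻¹) * B * (S⁻¹ * S) from by
      simp only [Matrix.mul_assoc], hSinv, hSinv', Matrix.one_mul, Matrix.mul_one]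
  have h1 : 1 ≤ (1 + S⁻¹ * B * S⁻¹).det := det_one_add_psd hC
  have h2 : (A + B).det = A.det * (1 + S⁻¹ * B * S⁻¹).det := by
    rw [key, Matrix.det_mul, Matrix.det_mul,
      show S.det * (1 + S⁻¹ * B * S⁻¹).det * S.det
        = (S.det * S.det) * (1 + S⁻¹ * B * S⁻¹).det from by ring, ← Matrix.det_mul, hSS]
  rw [h2]
  nlinarith

lemma second_deriv_nonpos_at_max {g : ℝ → ℝ} (hg : ContDiff ℝ 2 g)
    (hmax : ∀ t, g t ≤ g 0) : deriv (deriv g) 0 ≤ 0 := by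
  by_contra h
  push_neg at h
  have hg' : ContDiff ℝ 1 (deriv g) := by
    have := (contDiff_succ_iff_deriv (n := 1)).mp (by exact_mod_cast hg)
    exact this.2.2
  have hg'' : Continuous (deriv (deriv g)) := (contDiff_one_iff_deriv.mp hg').2
  have hd0 : deriv g 0 = 0 := by
    have hm : IsLocalMax g 0 := Filter.Eventually.of_forall hmax
    exact hm.deriv_eq_zero
  have hev : ∀ᶠ t in nhds 0, 0 < deriv (deriv g) t :=
    hg''.continuousAt (Ioi_mem_nhds h)
  obtain ⟨ε, hε, hball⟩ := Metric.eventually_nhds_iff.mp hev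
  set a := ε / 2 with ha
  have haε : a < ε := by simp [ha]; linarith
  have ha0 : 0 < a := by positivity
  have hpos : ∀ t ∈ Set.Ioo (0:ℝ) a, 0 < deriv (deriv g) t := by
    intro t ht
    apply hball
    rw [Real.dist_eq, sub_zero, abs_of_pos ht.1]
    linarith [ht.2]
  have hmono1 : StrictMonoOn (deriv g) (Set.Icc 0 a) := by
    apply strictMonoOn_of_deriv_pos (convex_Icc 0 a) (hg'.continuous.continuousOn)
    intro t ht
    rw [interior_Icc] at ht
    exact hpos t ht
  have hdpos : ∀ t ∈ Set.Ioo (0:ℝ) a, 0 < deriv g t := by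
    intro t ht
    have := hmono1 (Set.left_mem_Icc.mpr ha0.le) ⟨ht.1.le, ht.2.le⟩ ht.1
    rwa [hd0] at this
  have hmono2 : StrictMonoOn g (Set.Icc 0 a) := by
    apply strictMonoOn_of_deriv_pos (convex_Icc 0 a) (hg.continuous.continuousOn)
    intro t ht
    rw [interior_Icc] at ht
    exact hdpos t ht
  have := hmono2 (Set.left_mem_Icc.mpr ha0.le) (Set.right_mem_Icc.mpr ha0.le) ha0
  exact absurd (hmax a) (not_le.mpr this)

lemma snd_fderiv_nonpos_at_max {N : ℕ} {w : (Fin N → ℝ) → ℝ} (hw : ContDiff ℝ 2 w)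
    {x₀ : Fin N → ℝ} (hmax : ∀ x, w x ≤ w x₀) (v : Fin N → ℝ) :
    fderiv ℝ (fderiv ℝ w) x₀ v v ≤ 0 := by
  have hwd : Differentiable ℝ w := hw.differentiable (by norm_num)
  have hw' : ContDiff ℝ 1 (fderiv ℝ w) := hw.fderiv_right (by norm_num)
  set φ : ℝ → (Fin N → ℝ) := fun t => x₀ + t • v with hφdef
  have hφ : ∀ t, HasDerivAt φ v t := by
    intro t
    have : HasDerivAt (fun y : ℝ => y • v) ((1:ℝ) • v) t := (hasDerivAt_id t).smul_const v
    rw [one_smul] at this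
    exact this.const_add x₀
  have hφc : ContDiff ℝ 2 φ := contDiff_const.add (contDiff_id.smul contDiff_const)
  set g : ℝ → ℝ := fun t => w (φ t) with hgdef
  have hgc : ContDiff ℝ 2 g := hw.comp hφc
  have hder : ∀ t, HasDerivAt g (fderiv ℝ w (φ t) v) t := fun t =>
    (hwd (φ t)).hasFDerivAt.comp_hasDerivAt t (hφ t)
  have hderiv_g : deriv g = fun t => fderiv ℝ w (φ t) v := funext fun t => (hder t).deriv
  have hφ0 : φ 0 = x₀ := by simp [hφdef]
  have h2 : HasDerivAt (deriv g) (fderiv ℝ (fderiv ℝ w) x₀ v v) 0 := by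
    rw [hderiv_g]
    have hc : HasFDerivAt (fun y => fderiv ℝ w y v)
        ((fderiv ℝ (fderiv ℝ w) x₀).flip v) x₀ := by
      have := ((hw'.differentiable one_ne_zero x₀).hasFDerivAt).clm_apply
        (hasFDerivAt_const v x₀)
      simpa using this
    have hc' : HasFDerivAt (fun y => fderiv ℝ w y v)
        ((fderiv ℝ (fderiv ℝ w) x₀).flip v) (φ 0) := by rw [hφ0]; exact hc
    have := hc'.comp_hasDerivAt 0 (hφ 0)
    exact this
  have hmax' : ∀ t, g t ≤ g 0 := by
    intro t
    simp only [hgdef, hφ0]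
    exact hmax (φ t)
  have := second_deriv_nonpos_at_max hgc hmax'
  rwa [h2.deriv] at this

lemma exists_max_of_periodic' {N : ℕ} {w : (Fin N → ℝ) → ℝ} (hc : Continuous w)
    (hper : ∀ (x : Fin N → ℝ) (k : Fin N → ℤ), w (x + fun i => (k i : ℝ)) = w x) :
    ∃ x₀, ∀ x, w x ≤ w x₀ := by
  have hK : IsCompact (Set.Icc (0 : Fin N → ℝ) 1) := isCompact_Icc
  have hne : (Set.Icc (0 : Fin N → ℝ) 1).Nonempty :=
    ⟨0, le_refl 0, fun i => by norm_num⟩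
  obtain ⟨x₀, _, hmax⟩ := hK.exists_isMaxOn hne hc.continuousOn
  refine ⟨x₀, fun x => ?_⟩
  set k : Fin N → ℤ := fun i => -⌊x i⌋ with hk
  have hmem : (x + fun i => (k i : ℝ)) ∈ Set.Icc (0 : Fin N → ℝ) 1 := by
    constructor
    · intro i
      have := Int.fract_nonneg (x i)
      simp only [hk, Pi.add_apply, Pi.zero_apply, Int.cast_neg]
      rw [Int.fract] at this
      linarith
    · intro i
      have := (Int.fract_lt_one (x i)).le
      simp only [hk, Pi.add_apply, Pi.one_apply, Int.cast_neg]
      rw [Int.fract] at this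
      linarith
  calc w x = w (x + fun i => (k i : ℝ)) := (hper x k).symm
  _ ≤ w x₀ := hmax hmem

lemma vec_eq_sum {N : ℕ} (v : Fin N → ℝ) : v = ∑ i, v i • (Pi.single i 1 : Fin N → ℝ) := by
  ext j
  rw [Finset.sum_apply]
  simp [Pi.single_apply]

lemma bilin_expand {N : ℕ} (B : (Fin N → ℝ) →L[ℝ] (Fin N → ℝ) →L[ℝ] ℝ) (v : Fin N → ℝ) :
    B v v = ∑ i, ∑ j, v i * v j * B (Pi.single i 1) (Pi.single j 1) := by
  have h0 : B v v = B (∑ i, v i • (Pi.single i 1 : Fin N → ℝ))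
      (∑ j, v j • (Pi.single j 1 : Fin N → ℝ)) := by
    rw [← vec_eq_sum]
  rw [h0]
  simp only [map_sum, _root_.map_smul, ContinuousLinearMap.sum_apply,
    ContinuousLinearMap.smul_apply, smul_eq_mul, Finset.mul_sum]
  rw [Finset.sum_comm]
  apply Finset.sum_congr rfl
  intro i _
  apply Finset.sum_congr rfl
  intro j _
  ring

lemma hess_eq_snd {N : ℕ} {u : (Fin N → ℝ) → ℝ} (hu : ContDiff ℝ 2 u) (x : Fin N → ℝ)
    (i j : Fin N) :
    hess u x i j = fderiv ℝ (fderiv ℝ u) x (Pi.single i 1) (Pi.single j 1) := by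
  have hu' : ContDiff ℝ 1 (fderiv ℝ u) := hu.fderiv_right (by norm_num)
  unfold hess
  rw [fderiv_clm_apply (hu'.differentiable one_ne_zero x) (differentiableAt_const _)]
  simp

/-- core comparison lemma -/
lemma core_le {N : ℕ} (lam : ℝ) (hlam : 0 < lam) (p : ℝ)
    (f : (Fin N → ℝ) → ℝ) (hfpos : ∀ x, 0 < f x)
    (u₁ u₂ : (Fin N → ℝ) → ℝ)
    (hu₁ : ContDiff ℝ 2 u₁) (hper₁ : ZPeriodic u₁)
    (hu₂ : ContDiff ℝ 2 u₂) (hper₂ : ZPeriodic u₂) (hadm₂ : Admissible u₂)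
    (heq₁ : ∀ x, (amat u₁ x).det =
      Real.exp (-(lam * u₁ x)) * f x * (1 + gradSq u₁ x) ^ p)
    (heq₂ : ∀ x, (amat u₂ x).det =
      Real.exp (-(lam * u₂ x)) * f x * (1 + gradSq u₂ x) ^ p) :
    ∀ x, u₁ x ≤ u₂ x := by
  set w : (Fin N → ℝ) → ℝ := fun x => u₁ x - u₂ x with hwdef
  have hw : ContDiff ℝ 2 w := hu₁.sub hu₂
  obtain ⟨x₀, hmax⟩ := exists_max_of_periodic' hw.continuous
    (fun x k => by simp only [hwdef]; rw [hper₁ x k, hper₂ x k])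
  have hd₁ : Differentiable ℝ u₁ := hu₁.differentiable (by norm_num)
  have hd₂ : Differentiable ℝ u₂ := hu₂.differentiable (by norm_num)
  have hfd : ∀ y, fderiv ℝ w y = fderiv ℝ u₁ y - fderiv ℝ u₂ y :=
    fun y => fderiv_sub (hd₁ y) (hd₂ y)
  have hmax0 : fderiv ℝ w x₀ = 0 := by
    have hm : IsLocalMax w x₀ := Filter.Eventually.of_forall hmax
    exact hm.fderiv_eq_zero
  have hgradL : fderiv ℝ u₁ x₀ = fderiv ℝ u₂ x₀ := by
    have := hfd x₀
    rw [hmax0] at this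
    exact (sub_eq_zero.mp this.symm)
  have hgrad : ∀ i, grad u₁ x₀ i = grad u₂ x₀ i := fun i => by
    unfold grad; rw [hgradL]
  -- second derivative comparison
  have hfd1 : ContDiff ℝ 1 (fderiv ℝ u₁) := hu₁.fderiv_right (by norm_num)
  have hfd2 : ContDiff ℝ 1 (fderiv ℝ u₂) := hu₂.fderiv_right (by norm_num)
  have hW : fderiv ℝ (fderiv ℝ w) x₀
      = fderiv ℝ (fderiv ℝ u₁) x₀ - fderiv ℝ (fderiv ℝ u₂) x₀ := by
    have hfw : fderiv ℝ w = fun y => fderiv ℝ u₁ y - fderiv ℝ u₂ y := funext hfd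
    rw [hfw, fderiv_fun_sub (hfd1.differentiable one_ne_zero x₀) (hfd2.differentiable one_ne_zero x₀)]
  have hhessw : ∀ i j, hess u₁ x₀ i j - hess u₂ x₀ i j
      = fderiv ℝ (fderiv ℝ w) x₀ (Pi.single i 1) (Pi.single j 1) := by
    intro i j
    rw [hess_eq_snd hu₁ x₀ i j, hess_eq_snd hu₂ x₀ i j, hW]
    simp
  have hsymm : ∀ v v₂, fderiv ℝ (fderiv ℝ w) x₀ v v₂ = fderiv ℝ (fderiv ℝ w) x₀ v₂ v := by
    have := (hw.contDiffAt (x := x₀)).isSymmSndFDerivAt (by simp [minSmoothness_of_isRCLikeNormedField])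
    exact fun v v₂ => this v v₂
  set M : Matrix (Fin N) (Fin N) ℝ :=
    Matrix.of (fun i j => hess u₂ x₀ i j - hess u₁ x₀ i j) with hM
  have hMpsd : M.PosSemidef := by
    refine posSemidef_iff_dotProduct_mulVec.mpr ⟨?_, ?_⟩
    · ext i j
      simp only [hM, Matrix.conjTranspose_apply, Matrix.of_apply, star_trivial]
      have h1 := hhessw j i
      have h2 := hhessw i j
      rw [hsymm (Pi.single j 1) (Pi.single i 1)] at h1
      linarith
    · intro v
      simp only [star_trivial]
      have hquad : v ⬝ᵥ M.mulVec v
          = -(fderiv ℝ (fderiv ℝ w) x₀ (fun i => v i) (fun i => v i)) := by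
        rw [bilin_expand]
        unfold dotProduct Matrix.mulVec
        rw [← Finset.sum_neg_distrib]
        apply Finset.sum_congr rfl
        intro i _
        unfold dotProduct
        rw [Finset.mul_sum, ← Finset.sum_neg_distrib]
        apply Finset.sum_congr rfl
        intro j _
        have := hhessw i j
        simp only [hM, Matrix.of_apply]
        rw [show v i * v j * fderiv ℝ (fderiv ℝ w) x₀ (Pi.single i 1) (Pi.single j 1)
          = v i * v j * (hess u₁ x₀ i j - hess u₂ x₀ i j) from by rw [this]]
        ring
      rw [hquad]
      have := snd_fderiv_nonpos_at_max hw hmax (fun i => v i)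
      linarith
  have hamat : amat u₁ x₀ = amat u₂ x₀ + M := by
    ext i j
    simp only [amat, hM, Matrix.add_apply, Matrix.sub_apply, Matrix.of_apply, hgrad i, hgrad j]
    ring
  have hdet : (amat u₂ x₀).det ≤ (amat u₁ x₀).det := by
    rw [hamat]
    exact det_le_det_add_psd (hadm₂ x₀) hMpsd
  have hgs : gradSq u₁ x₀ = gradSq u₂ x₀ := by
    unfold gradSq
    exact Finset.sum_congr rfl (fun i _ => by rw [hgrad i])
  rw [heq₁ x₀, heq₂ x₀, hgs] at hdet
  have hgs0 : (0:ℝ) ≤ gradSq u₂ x₀ := Finset.sum_nonneg (fun i _ => sq_nonneg _)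
  have hcpos : (0:ℝ) < (1 + gradSq u₂ x₀) ^ p := Real.rpow_pos_of_pos (by linarith) p
  have hstep1 : Real.exp (-(lam * u₂ x₀)) * f x₀ ≤ Real.exp (-(lam * u₁ x₀)) * f x₀ :=
    le_of_mul_le_mul_right hdet hcpos
  have hstep2 : Real.exp (-(lam * u₂ x₀)) ≤ Real.exp (-(lam * u₁ x₀)) :=
    le_of_mul_le_mul_right hstep1 (hfpos x₀)
  have hple := Real.exp_le_exp.mp hstep2
  have hx₀ : u₁ x₀ ≤ u₂ x₀ := by
    have : lam * u₁ x₀ ≤ lam * u₂ x₀ := by linarith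
    exact le_of_mul_le_mul_left this hlam
  intro x
  have := hmax x
  simp only [hwdef] at this
  linarith

end Aux

/-- Uniqueness: two admissible periodic solutions of
`det A[u] = e^{−λu} f (1 + ‖∇u‖²)^p` coincide. -/
theorem stmt6 {N : ℕ} (hN : 1 ≤ N) (p : ℝ) (hp : 0 ≤ p) (lam : ℝ) (hlam : 0 < lam)
    (f : (Fin N → ℝ) → ℝ) (hfcont : Continuous f)
    (hfper : ∀ (x : Fin N → ℝ) (k : Fin N → ℤ), f (x + fun i => (k i : ℝ)) = f x)
    (hfpos : ∀ x, 0 < f x)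
    (u₁ u₂ : (Fin N → ℝ) → ℝ)
    (hu₁ : ContDiff ℝ 2 u₁) (hper₁ : ZPeriodic u₁) (hadm₁ : Admissible u₁)
    (hu₂ : ContDiff ℝ 2 u₂) (hper₂ : ZPeriodic u₂) (hadm₂ : Admissible u₂)
    (heq₁ : ∀ x, (amat u₁ x).det =
      Real.exp (-(lam * u₁ x)) * f x * (1 + gradSq u₁ x) ^ p)
    (heq₂ : ∀ x, (amat u₂ x).det =
      Real.exp (-(lam * u₂ x)) * f x * (1 + gradSq u₂ x) ^ p) :
    u₁ = u₂ := by
  have h12 := core_le lam hlam p f hfpos u₁ u₂ hu₁ hper₁ hu₂ hper₂ hadm₂ heq₁ heq₂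
  have h21 := core_le lam hlam p f hfpos u₂ u₁ hu₂ hper₂ hu₁ hper₁ hadm₁ heq₂ heq₁
  funext x
  exact le_antisymm (h12 x) (h21 x)
end

section
/- Let N ≥ 1 and let u : ℝ^N → ℝ be a C², ℤ^N-periodic function such that det A[u](x) > 0 for every x ∈ ℝ^N. Then A[u](x) is positive definite for every x ∈ ℝ^N; that is, u is admissible. -/
open Matrix Real

section test
variable {N : ℕ} {u : (Fin N → ℝ) → ℝ}

lemma hess_eq (hu : ContDiff ℝ 2 u) (x : Fin N → ℝ) (i j : Fin N) :
    hess u x i j = fderiv ℝ (fderiv ℝ u) x (Pi.single i 1) (Pi.single j 1) := by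
  have hF : ContDiff ℝ 1 (fderiv ℝ u) := hu.fderiv_right (by norm_num)
  have hd : DifferentiableAt ℝ (fderiv ℝ u) x := hF.differentiable one_ne_zero x
  set e : ((Fin N → ℝ) →L[ℝ] ℝ) →L[ℝ] ℝ := ContinuousLinearMap.apply ℝ ℝ (Pi.single j 1) with he
  have h1 : HasFDerivAt (⇑e ∘ fderiv ℝ u) (e.comp (fderiv ℝ (fderiv ℝ u) x)) x :=
    e.hasFDerivAt.comp x hd.hasFDerivAt
  have h2 : (fun y => fderiv ℝ u y (Pi.single j 1)) = ⇑e ∘ fderiv ℝ u := rfl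
  rw [hess, h2, h1.fderiv]
  rfl

lemma hess_symm (hu : ContDiff ℝ 2 u) (x : Fin N → ℝ) (i j : Fin N) :
    hess u x i j = hess u x j i := by
  rw [hess_eq hu, hess_eq hu]
  exact (hu.contDiffAt.isSymmSndFDerivAt (by simp)) _ _

lemma grad_cont (hu : ContDiff ℝ 2 u) (i : Fin N) : Continuous fun x => grad u x i := by
  exact (ContinuousLinearMap.apply ℝ ℝ (Pi.single i 1)).continuous.comp
    (hu.continuous_fderiv two_ne_zero)

lemma hess_cont (hu : ContDiff ℝ 2 u) (i j : Fin N) : Continuous fun x => hess u x i j := by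
  have hF : ContDiff ℝ 1 (fderiv ℝ u) := hu.fderiv_right (by norm_num)
  have : Continuous fun x => fderiv ℝ (fderiv ℝ u) x (Pi.single i 1) (Pi.single j 1) := by
    exact (ContinuousLinearMap.apply ℝ ℝ (Pi.single j 1)).continuous.comp
      ((ContinuousLinearMap.apply ℝ _ (Pi.single i 1)).continuous.comp
        (hF.continuous_fderiv one_ne_zero))
  simpa only [← hess_eq hu] using this

end test

section quad
variable {N : ℕ} {u : (Fin N → ℝ) → ℝ}

/-- The quadratic form of `amat` as an explicit double sum. -/
noncomputable def Qd (u : (Fin N → ℝ) → ℝ) (x v : Fin N → ℝ) : ℝ :=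
  ∑ i, ∑ j, v i * amat u x i j * v j

lemma Qd_eq_dot (x v : Fin N → ℝ) : v ⬝ᵥ (amat u x) *ᵥ v = Qd u x v := by
  simp [Qd, dotProduct, mulVec, Finset.mul_sum, mul_assoc]

lemma star_pi_eq (v : Fin N → ℝ) : star v = v := funext fun i => star_trivial _

lemma Qd_smul (x v : Fin N → ℝ) (a : ℝ) : Qd u x (a • v) = a ^ 2 * Qd u x v := by
  simp only [Qd, Pi.smul_apply, smul_eq_mul, Finset.mul_sum]
  exact Finset.sum_congr rfl fun i _ => Finset.sum_congr rfl fun j _ => by ring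

lemma Qd_formula (x v : Fin N → ℝ) :
    Qd u x v = (∑ i, v i ^ 2) + (∑ i, v i * grad u x i) ^ 2
      - ∑ i, ∑ j, v i * v j * hess u x i j := by
  simp only [Qd, amat, Matrix.sub_apply, Matrix.add_apply, Matrix.one_apply, Matrix.of_apply,
    add_mul, sub_mul, mul_add, mul_sub, Finset.sum_add_distrib, Finset.sum_sub_distrib]
  congr 1
  · congr 1
    · exact Finset.sum_congr rfl fun i _ => by
        simp [mul_ite, ite_mul, sq]
    · rw [sq, Finset.sum_mul_sum]
      exact Finset.sum_congr rfl fun i _ => Finset.sum_congr rfl fun j _ => by ring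
  · exact Finset.sum_congr rfl fun i _ => Finset.sum_congr rfl fun j _ => by ring

lemma amat_herm (hu : ContDiff ℝ 2 u) (x : Fin N → ℝ) : (amat u x).IsHermitian := by
  refine Matrix.ext fun i j => ?_
  simp only [conjTranspose_apply, star_trivial, amat, Matrix.sub_apply, Matrix.add_apply,
    Matrix.one_apply, Matrix.of_apply]
  rw [hess_symm hu x j i, mul_comm]
  congr 1
  simp [eq_comm]

lemma posDef_of_Qd (hu : ContDiff ℝ 2 u) (x : Fin N → ℝ)
    (h : ∀ v : Fin N → ℝ, v ≠ 0 → 0 < Qd u x v) : (amat u x).PosDef :=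
  .of_dotProduct_mulVec_pos (amat_herm hu x) fun v hv => by rw [star_pi_eq, Qd_eq_dot]; exact h v hv

lemma posDef_of_posSemidef_det {A : Matrix (Fin N) (Fin N) ℝ} (h : A.PosSemidef)
    (hd : A.det ≠ 0) : A.PosDef := by
  refine .of_dotProduct_mulVec_pos h.isHermitian fun v hv => lt_of_le_of_ne (h.dotProduct_mulVec_nonneg v) fun heq => hv ?_
  have h0 : A *ᵥ v = 0 := (h.dotProduct_mulVec_zero_iff v).mp heq.symm
  exact Matrix.eq_zero_of_mulVec_eq_zero hd h0

end quad

section oned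
open Topology Filter

/-- Second-derivative test (necessary direction), 1-D. -/
lemma deriv2_nonpos {g g' : ℝ → ℝ} {c : ℝ} (hg : ∀ t, HasDerivAt g (g' t) t)
    (hc : HasDerivAt g' c 0) (hmax : IsLocalMax g 0) : c ≤ 0 := by
  by_contra hpos
  push_neg at hpos
  have hg'0 : g' 0 = 0 := hmax.hasDerivAt_eq_zero (hg 0)
  have hslope : Filter.Tendsto (slope g' 0) (𝓝[≠] 0) (𝓝 c) :=
    hasDerivAt_iff_tendsto_slope.mp hc
  have hslope' : Filter.Tendsto (slope g' 0) (𝓝[>] 0) (𝓝 c) :=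
    hslope.mono_left (nhdsWithin_mono _ fun t ht => ne_of_gt ht)
  have hev : ∀ᶠ t in 𝓝[>] (0:ℝ), 0 < slope g' 0 t :=
    hslope'.eventually (eventually_gt_nhds hpos)
  have hev2 : ∀ᶠ t in 𝓝[>] (0:ℝ), 0 < g' t := by
    filter_upwards [hev, self_mem_nhdsWithin] with t ht ht'
    have : slope g' 0 t = g' t / t := by simp [slope_def_field, hg'0]
    rw [this] at ht
    have := mul_pos ht (show (0:ℝ) < t from ht')
    rwa [div_mul_cancel₀ _ (ne_of_gt ht')] at this
  have hev3 : ∀ᶠ t in 𝓝[>] (0:ℝ), g t ≤ g 0 := by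
    exact nhdsWithin_le_nhds hmax
  obtain ⟨δ, hδpos, hδ⟩ := (nhdsGT_basis_of_exists_gt ⟨1, one_pos⟩).eventually_iff.mp
    (hev2.and hev3)
  have hmono : StrictMonoOn g (Set.Icc 0 (δ/2)) := by
    apply strictMonoOn_of_deriv_pos (convex_Icc 0 (δ/2))
    · exact fun t _ => ((hg t).differentiableAt).continuousAt.continuousWithinAt
    · intro t ht
      rw [interior_Icc] at ht
      rw [(hg t).deriv]
      exact (hδ ⟨ht.1, by linarith [ht.2]⟩).1
  have h1 : g 0 < g (δ/2) := hmono (Set.left_mem_Icc.mpr (by linarith))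
    (Set.right_mem_Icc.mpr (by linarith)) (by linarith)
  have h2 : g (δ/2) ≤ g 0 := (hδ ⟨by linarith, by linarith⟩).2
  linarith

end oned

section maxpt
variable {N : ℕ} {u : (Fin N → ℝ) → ℝ}

lemma clm_apply_eq_sum (φ : (Fin N → ℝ) →L[ℝ] ℝ) (w : Fin N → ℝ) :
    φ w = ∑ j, w j * φ (Pi.single j 1) := by
  have hw : w = ∑ j, w j • (Pi.single j 1 : Fin N → ℝ) := by
    ext k
    simp [Pi.single_apply, Finset.sum_ite_eq, Finset.sum_ite_eq']
  conv_lhs => rw [hw]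
  rw [map_sum]
  simp [smul_eq_mul]

lemma hess_quad_eq (hu : ContDiff ℝ 2 u) (x v : Fin N → ℝ) :
    ∑ i, ∑ j, v i * v j * hess u x i j = fderiv ℝ (fderiv ℝ u) x v v := by
  set D := fderiv ℝ (fderiv ℝ u) x with hD
  have hw : v = ∑ i, v i • (Pi.single i 1 : Fin N → ℝ) := by
    ext k
    simp [Pi.single_apply, Finset.sum_ite_eq, Finset.sum_ite_eq']
  have h1 : D v = ∑ i, v i • D (Pi.single i 1) := by
    conv_lhs => rw [hw]
    rw [map_sum]
    simp
  rw [h1, ContinuousLinearMap.sum_apply]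
  refine Finset.sum_congr rfl fun i _ => ?_
  rw [ContinuousLinearMap.smul_apply, clm_apply_eq_sum (D (Pi.single i 1)) v,
    smul_eq_mul, Finset.mul_sum]
  exact Finset.sum_congr rfl fun j _ => by rw [hess_eq hu]; ring

lemma hasDerivAt_line (x v : Fin N → ℝ) (t : ℝ) :
    HasDerivAt (fun s : ℝ => x + s • v) v t := by
  simpa using ((hasDerivAt_id t).smul_const v).const_add x

lemma exists_posdef_at_max (hu : ContDiff ℝ 2 u) (x₀ : Fin N → ℝ)
    (hmax : ∀ y, u y ≤ u x₀) : (amat u x₀).PosDef := by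
  have hloc : IsLocalMax u x₀ := Filter.Eventually.of_forall hmax
  have hgrad0 : ∀ i, grad u x₀ i = 0 := by
    intro i
    rw [grad, hloc.fderiv_eq_zero]
    rfl
  have hF : ContDiff ℝ 1 (fderiv ℝ u) := hu.fderiv_right (by norm_num)
  have hdiff : Differentiable ℝ u := hu.differentiable two_ne_zero
  have hDvv : ∀ v : Fin N → ℝ, fderiv ℝ (fderiv ℝ u) x₀ v v ≤ 0 := by
    intro v
    set φ : ℝ → (Fin N → ℝ) := fun s => x₀ + s • v with hφ
    have hφ0 : φ 0 = x₀ := by simp [hφ]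
    have hg : ∀ t, HasDerivAt (fun s => u (φ s)) (fderiv ℝ u (φ t) v) t := fun t =>
      (hdiff (φ t)).hasFDerivAt.comp_hasDerivAt t (hasDerivAt_line x₀ v t)
    have hψ : HasFDerivAt (fun y => fderiv ℝ u y v)
        ((ContinuousLinearMap.apply ℝ ℝ v).comp (fderiv ℝ (fderiv ℝ u) x₀)) x₀ := by
      set e : ((Fin N → ℝ) →L[ℝ] ℝ) →L[ℝ] ℝ := ContinuousLinearMap.apply ℝ ℝ v
      exact e.hasFDerivAt.comp x₀ ((hF.differentiable one_ne_zero x₀).hasFDerivAt)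
    have hg' : HasDerivAt (fun t => fderiv ℝ u (φ t) v)
        (fderiv ℝ (fderiv ℝ u) x₀ v v) 0 := by
      rw [← hφ0] at hψ
      have := hψ.comp_hasDerivAt 0 (hasDerivAt_line x₀ v 0)
      rw [hφ0] at this
      exact this
    have hlocg : IsLocalMax (fun s => u (φ s)) 0 :=
      Filter.Eventually.of_forall fun t => by simpa [hφ0] using hmax (φ t)
    exact deriv2_nonpos hg hg' hlocg
  refine posDef_of_Qd hu x₀ fun v hv => ?_
  rw [Qd_formula]
  have h1 : (0:ℝ) < ∑ i, v i ^ 2 := by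
    obtain ⟨i, hi⟩ := Function.ne_iff.mp hv
    exact Finset.sum_pos' (fun j _ => sq_nonneg _)
      ⟨i, Finset.mem_univ i, by rw [← sq_abs]; exact pow_pos (abs_pos.mpr hi) 2⟩
  have h2 : (∑ i, v i * grad u x₀ i) = 0 := by simp [hgrad0]
  have h3 := hDvv v
  rw [← hess_quad_eq hu] at h3
  rw [h2]
  nlinarith

end maxpt

section topo
open Topology Filter
variable {N : ℕ} {u : (Fin N → ℝ) → ℝ}

lemma amat_cont (hu : ContDiff ℝ 2 u) (i j : Fin N) : Continuous fun x => amat u x i j := by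
  simp only [amat, Matrix.sub_apply, Matrix.add_apply, Matrix.of_apply, Matrix.one_apply]
  exact (continuous_const.add ((grad_cont hu i).mul (grad_cont hu j))).sub (hess_cont hu i j)

lemma Qd_cont_x (hu : ContDiff ℝ 2 u) (v : Fin N → ℝ) : Continuous fun x => Qd u x v :=
  continuous_finset_sum _ fun i _ => continuous_finset_sum _ fun j _ =>
    (continuous_const.mul (amat_cont hu i j)).mul continuous_const

lemma Qd_cont_v (x : Fin N → ℝ) : Continuous fun v : Fin N → ℝ => Qd u x v :=
  continuous_finset_sum _ fun i _ => continuous_finset_sum _ fun j _ =>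
    ((continuous_apply i).mul continuous_const).mul (continuous_apply j)

lemma posdef_nhds (hN : 1 ≤ N) (hu : ContDiff ℝ 2 u) (x₀ : Fin N → ℝ)
    (h0 : (amat u x₀).PosDef) : ∀ᶠ x in 𝓝 x₀, (amat u x).PosDef := by
  haveI : Nonempty (Fin N) := ⟨⟨0, hN⟩⟩
  have hsph : IsCompact (Metric.sphere (0 : Fin N → ℝ) 1) := isCompact_sphere _ _
  have hne : (Metric.sphere (0 : Fin N → ℝ) 1).Nonempty :=
    NormedSpace.sphere_nonempty.mpr zero_le_one
  obtain ⟨v₀, hv₀mem, hv₀min⟩ := hsph.exists_isMinOn hne (Qd_cont_v (u := u) x₀).continuousOn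
  have hv₀ne : v₀ ≠ 0 := by
    intro h
    have := mem_sphere_zero_iff_norm.mp hv₀mem
    rw [h] at this
    simpa using this
  have hc : 0 < Qd u x₀ v₀ := by
    have := h0.dotProduct_mulVec_pos hv₀ne
    rwa [star_pi_eq, Qd_eq_dot] at this
  set c := Qd u x₀ v₀ with hcdef
  set r : (Fin N → ℝ) → ℝ := fun x => ∑ i, ∑ j, |amat u x i j - amat u x₀ i j| with hrdef
  have hr : Continuous r :=
    continuous_finset_sum _ fun i _ => continuous_finset_sum _ fun j _ =>
      ((amat_cont hu i j).sub continuous_const).abs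
  have hr0 : r x₀ = 0 := by simp [hrdef]
  have hU : ∀ᶠ x in 𝓝 x₀, r x < c := by
    have h1 : r x₀ < c := by rw [hr0]; exact hc
    exact (hr.tendsto x₀).eventually (eventually_lt_nhds h1)
  filter_upwards [hU] with x hx
  refine posDef_of_Qd hu x fun v hv => ?_
  have hvn : ‖v‖ ≠ 0 := norm_ne_zero_iff.mpr hv
  set w : Fin N → ℝ := ‖v‖⁻¹ • v with hwdef
  have hwnorm : ‖w‖ = 1 := by
    rw [hwdef, norm_smul, norm_inv, norm_norm, inv_mul_cancel₀ hvn]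
  have hwmem : w ∈ Metric.sphere (0 : Fin N → ℝ) 1 := mem_sphere_zero_iff_norm.mpr hwnorm
  have hvw : v = ‖v‖ • w := by
    rw [hwdef, smul_smul, mul_inv_cancel₀ hvn, one_smul]
  have hq : Qd u x v = ‖v‖ ^ 2 * Qd u x w := by
    conv_lhs => rw [hvw]
    rw [Qd_smul]
  have hdiffeq : Qd u x w - Qd u x₀ w
      = ∑ i, ∑ j, w i * (amat u x i j - amat u x₀ i j) * w j := by
    rw [Qd, Qd, ← Finset.sum_sub_distrib]
    refine Finset.sum_congr rfl fun i _ => ?_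
    rw [← Finset.sum_sub_distrib]
    exact Finset.sum_congr rfl fun j _ => by ring
  have habs : |Qd u x w - Qd u x₀ w| ≤ r x := by
    rw [hdiffeq, hrdef]
    refine (Finset.abs_sum_le_sum_abs _ _).trans (Finset.sum_le_sum fun i _ => ?_)
    refine (Finset.abs_sum_le_sum_abs _ _).trans (Finset.sum_le_sum fun j _ => ?_)
    rw [abs_mul, abs_mul]
    have h1 : |w i| ≤ 1 := by
      have := norm_le_pi_norm w i
      rwa [hwnorm] at this
    have h2 : |w j| ≤ 1 := by
      have := norm_le_pi_norm w j
      rwa [hwnorm] at this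
    have h3 : (0:ℝ) ≤ |amat u x i j - amat u x₀ i j| := abs_nonneg _
    calc |w i| * |amat u x i j - amat u x₀ i j| * |w j|
        ≤ 1 * |amat u x i j - amat u x₀ i j| * 1 := by gcongr
      _ = |amat u x i j - amat u x₀ i j| := by ring
  have hmin : c ≤ Qd u x₀ w := hv₀min hwmem
  have hwpos : 0 < Qd u x w := by
    have := neg_abs_le (Qd u x w - Qd u x₀ w)
    linarith
  rw [hq]
  have : (0:ℝ) < ‖v‖ ^ 2 := by positivity
  exact mul_pos this hwpos

end topo

/-- If `det A[u] > 0` everywhere for a periodic `C²` function `u`,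
then `A[u]` is positive definite everywhere, i.e. `u` is admissible. -/
theorem stmt7 {N : ℕ} (hN : 1 ≤ N) (u : (Fin N → ℝ) → ℝ)
    (hu : ContDiff ℝ 2 u) (hper : ZPeriodic u)
    (hdet : ∀ x, 0 < (amat u x).det) :
    Admissible u := by
  classical
  set S : Set (Fin N → ℝ) := {x | ∀ v : Fin N → ℝ, 0 ≤ Qd u x v} with hS
  have hmem_iff : ∀ x, x ∈ S ↔ (amat u x).PosDef := by
    intro x
    constructor
    · intro hx
      refine posDef_of_posSemidef_det (.of_dotProduct_mulVec_nonneg (amat_herm hu x) fun v => ?_) (ne_of_gt (hdet x))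
      rw [star_pi_eq, Qd_eq_dot]
      exact hx v
    · intro hx v
      rcases eq_or_ne v 0 with rfl | hv
      · simp [Qd]
      · have := hx.dotProduct_mulVec_pos hv
        rw [star_pi_eq, Qd_eq_dot] at this
        exact this.le
  have hclosed : IsClosed S := by
    have : S = ⋂ v, {x | 0 ≤ Qd u x v} := by
      ext x
      simp [hS, Set.mem_iInter]
    rw [this]
    exact isClosed_iInter fun v => isClosed_le continuous_const (Qd_cont_x hu v)
  have hopen : IsOpen S := by
    rw [isOpen_iff_mem_nhds]
    intro x hx
    have hpd : (amat u x).PosDef := (hmem_iff x).mp hx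
    filter_upwards [posdef_nhds hN hu x hpd] with y hy
    exact (hmem_iff y).mpr hy
  have hne : S.Nonempty := by
    have hK : IsCompact (Set.Icc (0 : Fin N → ℝ) 1) := isCompact_Icc
    have h0K : (0 : Fin N → ℝ) ∈ Set.Icc 0 1 := Set.mem_Icc.mpr ⟨le_refl _, zero_le_one⟩
    obtain ⟨x₀, _, hx₀⟩ := hK.exists_isMaxOn ⟨0, h0K⟩ hu.continuous.continuousOn
    have hglob : ∀ y, u y ≤ u x₀ := by
      intro y
      set z : Fin N → ℝ := fun i => Int.fract (y i) with hz
      set k : Fin N → ℤ := fun i => ⌊y i⌋ with hk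
      have hy : y = z + fun i => (k i : ℝ) := by
        ext i
        show y i = Int.fract (y i) + (⌊y i⌋ : ℝ)
        exact (Int.fract_add_floor (y i)).symm
      have h1 : u y = u z := by rw [hy, hper z k]
      have h2 : z ∈ Set.Icc (0 : Fin N → ℝ) 1 := by
        refine Set.mem_Icc.mpr ⟨fun i => Int.fract_nonneg _, fun i => (Int.fract_lt_one _).le⟩
      rw [h1]
      exact hx₀ h2
    exact ⟨x₀, (hmem_iff x₀).mpr (exists_posdef_at_max hu x₀ hglob)⟩
  have huniv : S = Set.univ := IsClopen.eq_univ ⟨hclosed, hopen⟩ hne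
  intro x
  exact (hmem_iff x).mp (by rw [huniv]; exact Set.mem_univ x)
end
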